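/- arXiv:2011.10635 — 4 statements merged into one kernel-verified Lean document; each statement's English description precedes it below -/
import Mathlib

section
/- Let R ∈ SO(3) and let M be a 3×3 real symmetric positive-definite matrix. Then Tr((I₃ − R)M) ≥ 0, and Tr((I₃ − R)M) = 0 if and only if R = I₃. Consequently the error e_R = (1/4)·Tr((I₃ − R)M) is strictly positive for all R ≠ I₃ and vanishes only at R = I₃. -/
open Matrix

noncomputable section

/-- The special orthogonal group SO(3): real 3×3 matrices with
`R * Rᵀ = Rᵀ * R = I₃` and `det R = 1`. -/
def SO3 (R : Matrix (Fin 3) (Fin 3) ℝ) : Prop :=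
  R * Rᵀ = 1 ∧ Rᵀ * R = 1 ∧ R.det = 1

/-- The skew-symmetric matrix `[a]ₓ` associated to `a ∈ ℝ³`, satisfying
`[a]ₓ b = a × b`. -/
def skew (a : Fin 3 → ℝ) : Matrix (Fin 3) (Fin 3) ℝ :=
  !![0, -a 2, a 1; a 2, 0, -a 0; -a 1, a 0, 0]

/-- Anti-symmetric projection `P_a(X) = (X - Xᵀ)/2`. -/
def Pa (X : Matrix (Fin 3) (Fin 3) ℝ) : Matrix (Fin 3) (Fin 3) ℝ :=
  (1 / 2 : ℝ) • (X - Xᵀ)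

/-- The `vex` map, inverse of `skew` on skew-symmetric matrices. -/
def vex (X : Matrix (Fin 3) (Fin 3) ℝ) : Fin 3 → ℝ :=
  ![X 2 1, X 0 2, X 1 0]

/-- Normalized Euclidean distance `‖A‖_I = (1/4)·Tr(I₃ − A)`. -/
def normI (A : Matrix (Fin 3) (Fin 3) ℝ) : ℝ :=
  (1 / 4 : ℝ) * Matrix.trace (1 - A)

lemma trace_ct_mul_self_eq (T : Matrix (Fin 3) (Fin 3) ℝ) :
    Matrix.trace (Tᴴ * T) = ∑ j, ∑ i, (T i j)^2 := by
  simp [Matrix.trace, Matrix.mul_apply, Matrix.diag, sq]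

lemma trace_ct_mul_self_nonneg (T : Matrix (Fin 3) (Fin 3) ℝ) :
    0 ≤ Matrix.trace (Tᴴ * T) := by
  rw [trace_ct_mul_self_eq]; positivity

lemma eq_zero_of_trace_ct_mul_self {T : Matrix (Fin 3) (Fin 3) ℝ}
    (h : Matrix.trace (Tᴴ * T) = 0) : T = 0 := by
  rw [trace_ct_mul_self_eq] at h
  have h1 := (Finset.sum_eq_zero_iff_of_nonneg
    (fun j _ => Finset.sum_nonneg fun i _ => sq_nonneg (T i j))).mp h
  ext i j
  have h2 := (Finset.sum_eq_zero_iff_of_nonneg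
    (fun i _ => sq_nonneg (T i j))).mp (h1 j (Finset.mem_univ j)) i (Finset.mem_univ i)
  simpa using pow_eq_zero_iff (n := 2) (by norm_num) |>.mp h2


/-- For `R ∈ SO(3)` and `M` symmetric positive definite,
`Tr((I₃ − R)M) ≥ 0` with equality iff `R = I₃`; hence
`e_R = (1/4)·Tr((I₃ − R)M)` is positive for `R ≠ I₃` and vanishes only at
`R = I₃`. -/
theorem stmt3 (R M : Matrix (Fin 3) (Fin 3) ℝ)
    (hR : SO3 R) (hMsymm : M.IsSymm) (hMpd : M.PosDef) :
    0 ≤ Matrix.trace ((1 - R) * M) ∧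
    (Matrix.trace ((1 - R) * M) = 0 ↔ R = 1) ∧
    (R ≠ 1 → 0 < (1 / 4 : ℝ) * Matrix.trace ((1 - R) * M)) ∧
    ((1 / 4 : ℝ) * Matrix.trace ((1 - R) * M) = 0 ↔ R = 1) := by
  obtain ⟨hRRt, hRtR, hdet⟩ := hR
  set S : Matrix (Fin 3) (Fin 3) ℝ := 1 - (1/2 : ℝ) • (R + Rᵀ) with hSdef
  have hctR : ∀ A : Matrix (Fin 3) (Fin 3) ℝ, Aᴴ = Aᵀ := by
    intro A; ext i j; simp [Matrix.conjTranspose_apply]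
  -- S is positive semidefinite
  have hSh : S.IsHermitian := by
    unfold Matrix.IsHermitian
    rw [hctR]
    simp [hSdef, transpose_add, add_comm]
  have hSps : S.PosSemidef := by
    refine posSemidef_iff_dotProduct_mulVec.mpr ⟨hSh, fun x => ?_⟩
    have hy : (R *ᵥ x) ⬝ᵥ (R *ᵥ x) = x ⬝ᵥ x := by
      rw [dotProduct_mulVec, vecMul_mulVec, hRtR, vecMul_one]
    have hRt : x ⬝ᵥ (Rᵀ *ᵥ x) = (R *ᵥ x) ⬝ᵥ x := by
      rw [dotProduct_mulVec, vecMul_transpose]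
    have hpos : 0 ≤ (x - R *ᵥ x) ⬝ᵥ (x - R *ᵥ x) := by
      simpa using dotProduct_self_star_nonneg (x - R *ᵥ x)
    have hexp : (x - R *ᵥ x) ⬝ᵥ (x - R *ᵥ x)
        = x ⬝ᵥ x - x ⬝ᵥ (R *ᵥ x) - ((R *ᵥ x) ⬝ᵥ x - (R *ᵥ x) ⬝ᵥ (R *ᵥ x)) := by
      rw [sub_dotProduct, dotProduct_sub, dotProduct_sub]
    have hcomm : (R *ᵥ x) ⬝ᵥ x = x ⬝ᵥ (R *ᵥ x) := dotProduct_comm _ _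
    have hSx : star x ⬝ᵥ (S *ᵥ x) = x ⬝ᵥ x - (1/2 : ℝ) * (x ⬝ᵥ (R *ᵥ x) + x ⬝ᵥ (Rᵀ *ᵥ x)) := by
      simp [hSdef, sub_mulVec, add_mulVec, dotProduct_sub, dotProduct_add, smul_mulVec,
        dotProduct_smul, smul_eq_mul, star_trivial]
      ring
    rw [hSx, hRt, hcomm]
    nlinarith [hpos, hexp, hy, hcomm]
  -- trace equality: trace ((1-R)*M) = trace (S*M)
  have htrRt : Matrix.trace (Rᵀ * M) = Matrix.trace (R * M) := by
    calc Matrix.trace (Rᵀ * M) = Matrix.trace ((Rᵀ * M)ᵀ) := (trace_transpose _).symm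
    _ = Matrix.trace (Mᵀ * R) := by rw [transpose_mul, transpose_transpose]
    _ = Matrix.trace (M * R) := by rw [hMsymm.eq]
    _ = Matrix.trace (R * M) := trace_mul_comm _ _
  have htr : Matrix.trace ((1 - R) * M) = Matrix.trace (S * M) := by
    rw [hSdef, sub_mul, sub_mul, smul_mul_assoc, add_mul, trace_sub, trace_sub, trace_smul,
      trace_add, htrRt, smul_eq_mul]
    ring
  -- factor S and M
  obtain ⟨B, hB⟩ : ∃ B : Matrix (Fin 3) (Fin 3) ℝ, S = Bᴴ * B := by
    open scoped MatrixOrder in exact CStarAlgebra.nonneg_iff_eq_star_mul_self.mp hSps.nonneg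
  obtain ⟨C, hC⟩ : ∃ C : Matrix (Fin 3) (Fin 3) ℝ, M = Cᴴ * C := by
    open scoped MatrixOrder in exact CStarAlgebra.nonneg_iff_eq_star_mul_self.mp hMpd.posSemidef.nonneg
  have htr2 : Matrix.trace (S * M) = Matrix.trace ((C * Bᴴ)ᴴ * (C * Bᴴ)) := by
    rw [conjTranspose_mul, conjTranspose_conjTranspose, hB, hC]
    conv_rhs => rw [show B * Cᴴ * (C * Bᴴ) = (B * (Cᴴ * C)) * Bᴴ from by noncomm_ring,
      trace_mul_comm, ← mul_assoc]
  have hnonneg : 0 ≤ Matrix.trace ((1 - R) * M) := by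
    rw [htr, htr2]; exact trace_ct_mul_self_nonneg _
  -- equality case
  have hiff : Matrix.trace ((1 - R) * M) = 0 ↔ R = 1 := by
    constructor
    · intro h0
      rw [htr, htr2] at h0
      have hT0 : C * Bᴴ = 0 := eq_zero_of_trace_ct_mul_self h0
      have hSM : S * M = 0 := by
        rw [hB, hC, show Bᴴ * B * (Cᴴ * C) = Bᴴ * ((B * Cᴴ) * C) by noncomm_ring]
        have : B * Cᴴ = 0 := by
          have := congrArg conjTranspose hT0
          simpa [conjTranspose_mul] using this
        rw [this]; simp
      have hMdet : IsUnit M.det := isUnit_iff_ne_zero.mpr hMpd.det_pos.ne'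
      have hS0 : S = 0 := by
        have hSMM : S * M * M⁻¹ = S := by
          rw [mul_assoc, Matrix.mul_nonsing_inv M hMdet, mul_one]
        rw [← hSMM, hSM, Matrix.zero_mul]
      have hsum : R + Rᵀ = 1 + 1 := by
        have h0' : (1 : Matrix (Fin 3) (Fin 3) ℝ) - (1/2:ℝ) • (R + Rᵀ) = 0 := by
          rw [← hSdef]; exact hS0
        have h1 : (1/2 : ℝ) • (R + Rᵀ) = 1 := (sub_eq_zero.mp h0').symm
        calc R + Rᵀ = (2:ℝ) • ((1/2 : ℝ) • (R + Rᵀ)) := by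
              rw [smul_smul]; norm_num
        _ = (2:ℝ) • (1 : Matrix (Fin 3) (Fin 3) ℝ) := by rw [h1]
        _ = 1 + 1 := by rw [two_smul]
      have hN : (R - 1)ᴴ * (R - 1) = 0 := by
        rw [hctR, transpose_sub, transpose_one]
        have hexp : (Rᵀ - 1) * (R - 1) = Rᵀ * R - Rᵀ - R + 1 := by noncomm_ring
        rw [hexp, hRtR]
        calc (1 : Matrix (Fin 3) (Fin 3) ℝ) - Rᵀ - R + 1 = (1 + 1) - (R + Rᵀ) := by abel
        _ = 0 := by rw [← hsum]; exact sub_self _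
      have := Matrix.conjTranspose_mul_self_eq_zero.mp hN
      exact sub_eq_zero.mp this
    · intro h; subst h; simp
  refine ⟨hnonneg, hiff, fun hne => ?_, ?_⟩
  · have : Matrix.trace ((1 - R) * M) ≠ 0 := fun h => hne (hiff.mp h)
    have hlt : 0 < Matrix.trace ((1 - R) * M) := lt_of_le_of_ne hnonneg (Ne.symm this)
    linarith
  · constructor
    · intro h; exact hiff.mp (by linarith)
    · intro h; subst h; simp
end
end

section
/- Let R, R̂ ∈ SO(3), let u₁, …, u_m ∈ ℝ³ be unit vectors and s₁, …, s_m ≥ 0. Set M = Σⱼ sⱼ uⱼ uⱼᵀ, and, for each j, set vⱼ = Rᵀuⱼ and v̂ⱼ = R̂ᵀuⱼ, and let R̃ = R̂Rᵀ. Then [ R̂·Σⱼ (sⱼ/2)·(v̂ⱼ × vⱼ) ]_× = P_a(R̃M); equivalently, vex(P_a(R̃M)) = R̂·Σⱼ (sⱼ/2)·(v̂ⱼ × vⱼ). -/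
open Matrix

noncomputable section

lemma SO3.adj {R : Matrix (Fin 3) (Fin 3) ℝ} (h : SO3 R) : R.adjugate = Rᵀ := by
  have := Matrix.mul_adjugate R
  calc R.adjugate = (Rᵀ * R) * R.adjugate := by rw [h.2.1, one_mul]
    _ = Rᵀ * (R * R.adjugate) := by rw [Matrix.mul_assoc]
    _ = Rᵀ := by rw [this, h.2.2]; simp

lemma skew_mulVec {R : Matrix (Fin 3) (Fin 3) ℝ} (h : SO3 R) (a : Fin 3 → ℝ) :
    skew (R *ᵥ a) = R * skew a * Rᵀ := by
  have hadj := h.adj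
  rw [Matrix.adjugate_fin_three] at hadj
  have h00 := congrFun (congrFun hadj 0) 0
  have h01 := congrFun (congrFun hadj 0) 1
  have h02 := congrFun (congrFun hadj 0) 2
  have h10 := congrFun (congrFun hadj 1) 0
  have h11 := congrFun (congrFun hadj 1) 1
  have h12 := congrFun (congrFun hadj 1) 2
  have h20 := congrFun (congrFun hadj 2) 0
  have h21 := congrFun (congrFun hadj 2) 1
  have h22 := congrFun (congrFun hadj 2) 2
  simp [Matrix.transpose_apply] at h00 h01 h02 h10 h11 h12 h20 h21 h22
  ext i j
  fin_cases i <;> fin_cases j <;>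
    simp [skew, Matrix.mul_apply, Matrix.mulVec, dotProduct,
      Fin.sum_univ_three] <;>
    first
    | ring1
    | linear_combination (-(a 0):ℝ) * h02 - a 1 * h12 - a 2 * h22
    | linear_combination (a 0:ℝ) * h02 + a 1 * h12 + a 2 * h22
    | linear_combination (a 0:ℝ) * h01 + a 1 * h11 + a 2 * h21
    | linear_combination (-(a 0):ℝ) * h01 - a 1 * h11 - a 2 * h21
    | linear_combination (-(a 0):ℝ) * h00 - a 1 * h10 - a 2 * h20
    | linear_combination (a 0:ℝ) * h00 + a 1 * h10 + a 2 * h20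

lemma skew_smul (t : ℝ) (a : Fin 3 → ℝ) : skew (t • a) = t • skew a := by
  ext i j; fin_cases i <;> fin_cases j <;> simp [skew] <;> ring

lemma skew_add (a b : Fin 3 → ℝ) : skew (a + b) = skew a + skew b := by
  ext i j; fin_cases i <;> fin_cases j <;> simp [skew] <;> ring

lemma skew_zero : skew 0 = 0 := by
  ext i j; fin_cases i <;> fin_cases j <;> simp [skew, vecHead, vecTail]

lemma skew_sum {ι : Type*} (t : Finset ι) (f : ι → Fin 3 → ℝ) :
    skew (∑ j ∈ t, f j) = ∑ j ∈ t, skew (f j) := by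
  classical
  induction t using Finset.induction with
  | empty => simp [skew_zero]
  | insert _ _ h ih => rw [Finset.sum_insert h, Finset.sum_insert h, skew_add, ih]

lemma skew_cross (a b : Fin 3 → ℝ) :
    skew (crossProduct a b) = vecMulVec b a - vecMulVec a b := by
  ext i j
  fin_cases i <;> fin_cases j <;>
    simp [skew, crossProduct, vecMulVec] <;> ring

lemma mul_vmv (A : Matrix (Fin 3) (Fin 3) ℝ) (a b : Fin 3 → ℝ) :
    A * vecMulVec a b = vecMulVec (A *ᵥ a) b := by
  ext i j
  simp [Matrix.mul_apply, vecMulVec, Matrix.mulVec, dotProduct,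
    Finset.sum_mul, mul_assoc]

lemma vmv_transpose (a b : Fin 3 → ℝ) :
    (vecMulVec a b)ᵀ = vecMulVec b a := by
  ext i j; simp [vecMulVec, mul_comm]

lemma vmv_mulT (A : Matrix (Fin 3) (Fin 3) ℝ) (a b : Fin 3 → ℝ) :
    vecMulVec a b * Aᵀ = vecMulVec a (A *ᵥ b) := by
  ext i j
  simp [Matrix.mul_apply, vecMulVec, Matrix.mulVec, dotProduct,
    Finset.mul_sum, mul_comm, mul_assoc, mul_left_comm]

lemma vex_skew (a : Fin 3 → ℝ) : vex (skew a) = a := by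
  ext i; fin_cases i <;> rfl

/-- With `M = Σⱼ sⱼ uⱼuⱼᵀ`, `vⱼ = Rᵀuⱼ`, `v̂ⱼ = R̂ᵀuⱼ`,
`R̃ = R̂Rᵀ`, one has `[R̂·Σⱼ(sⱼ/2)(v̂ⱼ × vⱼ)]ₓ = P_a(R̃M)`, equivalently
`vex(P_a(R̃M)) = R̂·Σⱼ(sⱼ/2)(v̂ⱼ × vⱼ)`. -/
theorem stmt5 (m : ℕ) (R Rh : Matrix (Fin 3) (Fin 3) ℝ)
    (hR : SO3 R) (hRh : SO3 Rh)
    (u : Fin m → Fin 3 → ℝ) (hu : ∀ j, ∑ i, (u j i) ^ 2 = 1)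
    (s : Fin m → ℝ) (hs : ∀ j, 0 ≤ s j)
    (M : Matrix (Fin 3) (Fin 3) ℝ)
    (hM : M = ∑ j, s j • Matrix.vecMulVec (u j) (u j)) :
    skew (Rh *ᵥ ∑ j, (s j / 2) • (crossProduct (Rhᵀ *ᵥ u j) (Rᵀ *ᵥ u j)))
      = Pa ((Rh * Rᵀ) * M) ∧
    vex (Pa ((Rh * Rᵀ) * M))
      = Rh *ᵥ ∑ j, (s j / 2) • (crossProduct (Rhᵀ *ᵥ u j) (Rᵀ *ᵥ u j)) := by
  set Q := Rh * Rᵀ with hQ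
  have key1 : skew (Rh *ᵥ ∑ j, (s j / 2) • (crossProduct (Rhᵀ *ᵥ u j) (Rᵀ *ᵥ u j)))
      = ∑ j, (s j / 2) • (vecMulVec (Q *ᵥ u j) (u j) - vecMulVec (u j) (Q *ᵥ u j)) := by
    rw [skew_mulVec hRh, skew_sum, Finset.mul_sum, Finset.sum_mul]
    refine Finset.sum_congr rfl fun j _ => ?_
    rw [skew_smul, skew_cross, Matrix.mul_smul, Matrix.smul_mul, mul_sub,
      sub_mul, mul_vmv, mul_vmv, vmv_mulT, vmv_mulT,
      Matrix.mulVec_mulVec, Matrix.mulVec_mulVec, hRh.1, Matrix.one_mulVec]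
  have key2 : Pa (Q * M)
      = ∑ j, (s j / 2) • (vecMulVec (Q *ᵥ u j) (u j) - vecMulVec (u j) (Q *ᵥ u j)) := by
    rw [hM, Finset.mul_sum]
    unfold Pa
    rw [Matrix.transpose_sum, ← Finset.sum_sub_distrib, Finset.smul_sum]
    refine Finset.sum_congr rfl fun j _ => ?_
    rw [Matrix.mul_smul, mul_vmv, Matrix.transpose_smul, vmv_transpose,
      smul_sub, smul_smul, smul_smul, ← smul_sub]
    congr 1
    ring
  have h1 := key1.trans key2.symm
  refine ⟨h1, ?_⟩
  rw [← h1, vex_skew]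
end
end

section
/- Let R, R̂ ∈ SO(3), P, P̂ ∈ ℝ³, and let T, T̂ be the corresponding 4×4 homogeneous transformation matrices with last row (0,0,0,1). Let p ∈ ℝ³, write p̄ = (p, 1) ∈ ℝ⁴, and set y = Rᵀ(p − P) (so that ȳ = (y,1) = T⁻¹p̄). Then, for any b = (b_Ω, b_V) ∈ ℝ³ × ℝ³, the product T̂·[b]_∧·T̂⁻¹·(T̂T⁻¹)·p̄ equals the 4-vector whose first three components are −[R̂y]_× R̂ b_Ω + R̂ b_V and whose fourth component is 0; equivalently it equals the block matrix [[−R̂[y]_×, R̂],[0, 0]] applied to b (padded with a zero fourth row). -/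
open Matrix

noncomputable section

/-- Homogeneous transformation matrix on `ℝ⁴ = ℝ³ ⊕ ℝ`: rotation block `R`,
translation column `P`, last row `(0,0,0,1)`. -/
def Hom (R : Matrix (Fin 3) (Fin 3) ℝ) (P : Fin 3 → ℝ) :
    Matrix (Fin 3 ⊕ Fin 1) (Fin 3 ⊕ Fin 1) ℝ :=
  Matrix.fromBlocks R (Matrix.of fun i _ => P i) 0 1

/-- The wedge map `[b]_∧` for `b = (bΩ, bV) ∈ ℝ³ × ℝ³`: upper-left block
`[bΩ]ₓ`, upper-right column `bV`, zero last row. -/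
def wedge (bΩ bV : Fin 3 → ℝ) : Matrix (Fin 3 ⊕ Fin 1) (Fin 3 ⊕ Fin 1) ℝ :=
  Matrix.fromBlocks (skew bΩ) (Matrix.of fun i _ => bV i) 0 0


lemma homVec (R : Matrix (Fin 3) (Fin 3) ℝ) (P v : Fin 3 → ℝ) (c : ℝ) :
    Hom R P *ᵥ Sum.elim v (fun _ => c) = Sum.elim (R *ᵥ v + c • P) (fun _ => c) := by
  rw [Hom, fromBlocks_mulVec]
  funext i
  rcases i with i | i <;> simp [mulVec, dotProduct, mul_comm]

lemma wedgeVec (bΩ bV v : Fin 3 → ℝ) (c : ℝ) :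
    wedge bΩ bV *ᵥ Sum.elim v (fun _ => c) =
      Sum.elim (skew bΩ *ᵥ v + c • bV) (fun _ => (0 : ℝ)) := by
  rw [wedge, fromBlocks_mulVec]
  funext i
  rcases i with i | i <;> simp [mulVec, dotProduct, mul_comm]

lemma skew_anticomm (a b : Fin 3 → ℝ) : skew a *ᵥ b = -(skew b *ᵥ a) := by
  funext i
  fin_cases i <;> simp [skew, mulVec, dotProduct, Fin.sum_univ_three] <;> ring

lemma rot_cross (R : Matrix (Fin 3) (Fin 3) ℝ) (h1 : R * Rᵀ = 1) (hdet : R.det = 1)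
    (a b : Fin 3 → ℝ) :
    R *ᵥ (skew a *ᵥ b) = skew (R *ᵥ a) *ᵥ (R *ᵥ b) := by
  have hadj : Rᵀ = R.adjugate := by
    calc Rᵀ = (R.adjugate * R) * Rᵀ := by rw [Matrix.adjugate_mul, hdet, one_smul, one_mul]
    _ = R.adjugate * (R * Rᵀ) := by rw [mul_assoc]
    _ = R.adjugate := by rw [h1, mul_one]
  rw [Matrix.adjugate_fin_three] at hadj
  have e : ∀ i j, Rᵀ i j = (!![R 1 1 * R 2 2 - R 1 2 * R 2 1,
      -(R 0 1 * R 2 2) + R 0 2 * R 2 1,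
      R 0 1 * R 1 2 - R 0 2 * R 1 1;
      -(R 1 0 * R 2 2) + R 1 2 * R 2 0,
      R 0 0 * R 2 2 - R 0 2 * R 2 0,
      -(R 0 0 * R 1 2) + R 0 2 * R 1 0;
      R 1 0 * R 2 1 - R 1 1 * R 2 0,
      -(R 0 0 * R 2 1) + R 0 1 * R 2 0,
      R 0 0 * R 1 1 - R 0 1 * R 1 0] : Matrix (Fin 3) (Fin 3) ℝ) i j :=
    fun i j => by rw [hadj]
  have e00 := e 0 0; have e01 := e 0 1; have e02 := e 0 2
  have e10 := e 1 0; have e11 := e 1 1; have e12 := e 1 2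
  have e20 := e 2 0; have e21 := e 2 1; have e22 := e 2 2
  simp [Matrix.transpose_apply] at e00 e01 e02 e10 e11 e12 e20 e21 e22
  funext i
  fin_cases i <;>
    simp [skew, mulVec, dotProduct, Fin.sum_univ_three]
  · linear_combination (a 1 * b 2 - a 2 * b 1) * e00 + (a 2 * b 0 - a 0 * b 2) * e10 +
      (a 0 * b 1 - a 1 * b 0) * e20
  · linear_combination (a 1 * b 2 - a 2 * b 1) * e01 + (a 2 * b 0 - a 0 * b 2) * e11 +
      (a 0 * b 1 - a 1 * b 0) * e21
  · linear_combination (a 1 * b 2 - a 2 * b 1) * e02 + (a 2 * b 0 - a 0 * b 2) * e12 +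
      (a 0 * b 1 - a 1 * b 0) * e22

/-- with `y = Rᵀ(p − P)`, the product
`T̂·[b]_∧·T̂⁻¹·(T̂T⁻¹)·p̄` (with `p̄ = (p,1)`) equals the 4-vector with first
three components `−[R̂y]ₓR̂bΩ + R̂bV` and fourth component `0`. -/
theorem stmt8 (R Rh : Matrix (Fin 3) (Fin 3) ℝ) (hR : SO3 R) (hRh : SO3 Rh)
    (P Ph p bΩ bV : Fin 3 → ℝ) (y : Fin 3 → ℝ) (hy : y = Rᵀ *ᵥ (p - P)) :
    (Hom Rh Ph * wedge bΩ bV * Hom Rhᵀ (-(Rhᵀ *ᵥ Ph)) *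
        (Hom Rh Ph * Hom Rᵀ (-(Rᵀ *ᵥ P)))) *ᵥ Sum.elim p (fun _ => (1 : ℝ)) =
      Sum.elim (-(skew (Rh *ᵥ y) *ᵥ (Rh *ᵥ bΩ)) + Rh *ᵥ bV) (fun _ => (0 : ℝ)) := by
  obtain ⟨hR1, hR2, hR3⟩ := hR
  obtain ⟨hRh1, hRh2, hRh3⟩ := hRh
  rw [← mulVec_mulVec, ← mulVec_mulVec, ← mulVec_mulVec, ← mulVec_mulVec]
  have s1 : Hom Rᵀ (-(Rᵀ *ᵥ P)) *ᵥ Sum.elim p (fun _ => (1 : ℝ)) =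
      Sum.elim y (fun _ => (1 : ℝ)) := by
    rw [homVec, hy, Matrix.mulVec_sub]
    simp [sub_eq_add_neg]
  have s2 : Hom Rh Ph *ᵥ Sum.elim y (fun _ => (1 : ℝ)) =
      Sum.elim (Rh *ᵥ y + Ph) (fun _ => (1 : ℝ)) := by
    rw [homVec, one_smul]
  have s3 : Hom Rhᵀ (-(Rhᵀ *ᵥ Ph)) *ᵥ Sum.elim (Rh *ᵥ y + Ph) (fun _ => (1 : ℝ)) =
      Sum.elim y (fun _ => (1 : ℝ)) := by
    rw [homVec, Matrix.mulVec_add, mulVec_mulVec, hRh2, Matrix.one_mulVec]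
    funext i
    rcases i with i | i <;> simp
  rw [s1, s2, s3, wedgeVec, homVec, one_smul, zero_smul, add_zero, Matrix.mulVec_add]
  rw [rot_cross Rh hRh1 hRh3, skew_anticomm]
end
end

section
/- Let R̂ ∈ SO(3), let n ≥ 3, and let y₁, …, y_n ∈ ℝ³ be such that some three of them are non-collinear (i.e., there exist indices i, j, k with yⱼ − yᵢ and y_k − yᵢ linearly independent). Then the 3n×6 matrix Q whose i-th 3×6 block row is [ R̂[yᵢ]_× , −R̂ ] has trivial kernel (full column rank 6): if [yᵢ]_× Ω − V = 0 for all i, with Ω, V ∈ ℝ³, then Ω = 0 and V = 0. -/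
open Matrix

noncomputable section

lemma skew_sub (u v : Fin 3 → ℝ) : skew (u - v) = skew u - skew v := by
  ext i j
  fin_cases i <;> fin_cases j <;> simp [skew] <;> ring

lemma skew_aux (a b w : Fin 3 → ℝ) (ha : skew a *ᵥ w = 0) (hb : skew b *ᵥ w = 0)
    (hab : LinearIndependent ℝ ![a, b]) : w = 0 := by
  by_contra hw
  obtain ⟨c, hc⟩ := Function.ne_iff.mp hw
  simp only [Pi.zero_apply] at hc
  have ha0 := congrFun ha 0
  have ha1 := congrFun ha 1
  have ha2 := congrFun ha 2
  have hb0 := congrFun hb 0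
  have hb1 := congrFun hb 1
  have hb2 := congrFun hb 2
  simp [skew, mulVec, dotProduct, Fin.sum_univ_three] at ha0 ha1 ha2 hb0 hb1 hb2
  have hane : a ≠ 0 := by have := hab.ne_zero 0; simpa using this
  apply hane
  fin_cases c
  · -- w 0 ≠ 0
    have hc' : w 0 ≠ 0 := hc
    have k1 : b 0 * a 1 - a 0 * b 1 = 0 :=
      (mul_eq_zero.mp (by linear_combination (-(b 0)) * ha2 + a 0 * hb2 :
        (b 0 * a 1 - a 0 * b 1) * w 0 = 0)).resolve_right hc'
    have k2 : b 0 * a 2 - a 0 * b 2 = 0 :=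
      (mul_eq_zero.mp (by linear_combination b 0 * ha1 - a 0 * hb1 :
        (b 0 * a 2 - a 0 * b 2) * w 0 = 0)).resolve_right hc'
    obtain ⟨hs, ht⟩ := LinearIndependent.pair_iff.mp hab (b 0) (-(a 0)) (by
      funext m; fin_cases m
      · show b 0 * a 0 + (-(a 0)) * b 0 = 0; ring
      · show b 0 * a 1 + (-(a 0)) * b 1 = 0; linear_combination k1
      · show b 0 * a 2 + (-(a 0)) * b 2 = 0; linear_combination k2)
    have e0 : a 0 = 0 := by linarith [neg_eq_zero.mp ht]
    have e1 : a 1 = 0 :=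
      (mul_eq_zero.mp (by linear_combination -ha2 + w 1 * e0 :
        a 1 * w 0 = 0)).resolve_right hc'
    have e2 : a 2 = 0 :=
      (mul_eq_zero.mp (by linear_combination ha1 + w 2 * e0 :
        a 2 * w 0 = 0)).resolve_right hc'
    funext m; fin_cases m
    · exact e0
    · exact e1
    · exact e2
  · -- w 1 ≠ 0
    have hc' : w 1 ≠ 0 := hc
    have k0 : b 1 * a 0 - a 1 * b 0 = 0 :=
      (mul_eq_zero.mp (by linear_combination b 1 * ha2 - a 1 * hb2 :
        (b 1 * a 0 - a 1 * b 0) * w 1 = 0)).resolve_right hc'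
    have k2 : b 1 * a 2 - a 1 * b 2 = 0 :=
      (mul_eq_zero.mp (by linear_combination (-(b 1)) * ha0 + a 1 * hb0 :
        (b 1 * a 2 - a 1 * b 2) * w 1 = 0)).resolve_right hc'
    obtain ⟨hs, ht⟩ := LinearIndependent.pair_iff.mp hab (b 1) (-(a 1)) (by
      funext m; fin_cases m
      · show b 1 * a 0 + (-(a 1)) * b 0 = 0; linear_combination k0
      · show b 1 * a 1 + (-(a 1)) * b 1 = 0; ring
      · show b 1 * a 2 + (-(a 1)) * b 2 = 0; linear_combination k2)
    have e1 : a 1 = 0 := by linarith [neg_eq_zero.mp ht]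
    have e0 : a 0 = 0 :=
      (mul_eq_zero.mp (by linear_combination ha2 + w 0 * e1 :
        a 0 * w 1 = 0)).resolve_right hc'
    have e2 : a 2 = 0 :=
      (mul_eq_zero.mp (by linear_combination -ha0 + w 2 * e1 :
        a 2 * w 1 = 0)).resolve_right hc'
    funext m; fin_cases m
    · exact e0
    · exact e1
    · exact e2
  · -- w 2 ≠ 0
    have hc' : w 2 ≠ 0 := hc
    have k0 : b 2 * a 0 - a 2 * b 0 = 0 :=
      (mul_eq_zero.mp (by linear_combination (-(b 2)) * ha1 + a 2 * hb1 :
        (b 2 * a 0 - a 2 * b 0) * w 2 = 0)).resolve_right hc'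
    have k1 : b 2 * a 1 - a 2 * b 1 = 0 :=
      (mul_eq_zero.mp (by linear_combination b 2 * ha0 - a 2 * hb0 :
        (b 2 * a 1 - a 2 * b 1) * w 2 = 0)).resolve_right hc'
    obtain ⟨hs, ht⟩ := LinearIndependent.pair_iff.mp hab (b 2) (-(a 2)) (by
      funext m; fin_cases m
      · show b 2 * a 0 + (-(a 2)) * b 0 = 0; linear_combination k0
      · show b 2 * a 1 + (-(a 2)) * b 1 = 0; linear_combination k1
      · show b 2 * a 2 + (-(a 2)) * b 2 = 0; ring)
    have e2 : a 2 = 0 := by linarith [neg_eq_zero.mp ht]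
    have e0 : a 0 = 0 :=
      (mul_eq_zero.mp (by linear_combination -ha1 + w 0 * e2 :
        a 0 * w 2 = 0)).resolve_right hc'
    have e1 : a 1 = 0 :=
      (mul_eq_zero.mp (by linear_combination ha0 + w 1 * e2 :
        a 1 * w 2 = 0)).resolve_right hc'
    funext m; fin_cases m
    · exact e0
    · exact e1
    · exact e2

/-- If `n ≥ 3` landmarks `y₁,…,yₙ` contain three non-collinear
points, then the `3n×6` matrix `Q` with block rows `[R̂[yᵢ]ₓ, −R̂]` has trivial
kernel: `[yᵢ]ₓΩ − V = 0` for all `i` forces `Ω = 0` and `V = 0`. -/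
theorem stmt9 (n : ℕ) (hn : 3 ≤ n)
    (Rh : Matrix (Fin 3) (Fin 3) ℝ) (hRh : SO3 Rh)
    (y : Fin n → Fin 3 → ℝ)
    (hnc : ∃ i j k : Fin n, LinearIndependent ℝ ![y j - y i, y k - y i])
    (Ω V : Fin 3 → ℝ)
    (h : ∀ i, skew (y i) *ᵥ Ω - V = 0) :
    Ω = 0 ∧ V = 0 := by
  obtain ⟨i, j, k, hli⟩ := hnc
  have hdiff : ∀ m : Fin n, skew (y m - y i) *ᵥ Ω = 0 := by
    intro m
    rw [skew_sub, sub_mulVec, sub_eq_zero.mp (h m), sub_eq_zero.mp (h i), sub_self]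
  have hΩ : Ω = 0 := skew_aux _ _ _ (hdiff j) (hdiff k) hli
  refine ⟨hΩ, ?_⟩
  have := h i
  rw [hΩ, mulVec_zero, zero_sub, neg_eq_zero] at this
  exact this
end
end
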